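/- For the Erdős–Rényi random graph G(n,p) with a fixed constant p in (0,1) and fixed m >= 1, the variance of the number of (m+1)-stars satisfies Var[S_{m+1,n}] ~ (2/((m-1)!)^2) * n^{2m} p^{2m-1} (1-p) as n -> infinity; i.e., the ratio of the two sides tends to 1. -/

import Mathlib

open MeasureTheory ProbabilityTheory Finset Filter

/-- The number of `(m+1)`-stars in a graph on `Fin n` with edge indicators `X`. -/
def starCount (n m : ℕ) {Ω : Type*} (X : Fin n → Fin n → Ω → ℝ) (ω : Ω) : ℝ :=
  ∑ i, ∑ A ∈ (Finset.univ.erase i).powersetCard m, ∏ j ∈ A, X i j ω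


def edgeOf {n : ℕ} (e0 : {q : Fin n × Fin n // q.1 < q.2}) (i j : Fin n) :
    {q : Fin n × Fin n // q.1 < q.2} :=
  if h : i < j then ⟨(i,j), h⟩ else if h' : j < i then ⟨(j,i), h'⟩ else e0

lemma edgeOf_comm {n : ℕ} (e0 : {q : Fin n × Fin n // q.1 < q.2}) (i j : Fin n) :
    edgeOf e0 i j = edgeOf e0 j i := by
  unfold edgeOf
  rcases lt_trichotomy i j with h | h | h
  · rw [dif_pos h, dif_neg (not_lt.mpr h.le), dif_pos h]
  · subst h; rfl
  · rw [dif_neg (not_lt.mpr h.le), dif_pos h, dif_pos h]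

lemma edgeOf_eq_iff {n : ℕ} (e0 : {q : Fin n × Fin n // q.1 < q.2}) {i j k l : Fin n}
    (hij : i ≠ j) (hkl : k ≠ l) (h : edgeOf e0 i j = edgeOf e0 k l) :
    (i = k ∧ j = l) ∨ (i = l ∧ j = k) := by
  unfold edgeOf at h
  rcases lt_or_gt_of_ne hij with h1 | h1 <;> rcases lt_or_gt_of_ne hkl with h2 | h2
  · rw [dif_pos h1, dif_pos h2] at h
    simp only [Subtype.mk.injEq, Prod.mk.injEq] at h
    exact Or.inl h
  · rw [dif_pos h1, dif_neg (not_lt.mpr h2.le), dif_pos h2] at h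
    simp only [Subtype.mk.injEq, Prod.mk.injEq] at h
    exact Or.inr h
  · rw [dif_neg (not_lt.mpr h1.le), dif_pos h1, dif_pos h2] at h
    simp only [Subtype.mk.injEq, Prod.mk.injEq] at h
    exact Or.inr ⟨h.2, h.1⟩
  · rw [dif_neg (not_lt.mpr h1.le), dif_pos h1, dif_neg (not_lt.mpr h2.le), dif_pos h2] at h
    simp only [Subtype.mk.injEq, Prod.mk.injEq] at h
    exact Or.inl ⟨h.2, h.1⟩

lemma aux_card_filter_mem {α : Type*} [DecidableEq α] (S : Finset α) (x : α) (hx : x ∈ S) (k : ℕ) :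
    ((S.powersetCard (k+1)).filter (fun A => x ∈ A)).card = (S.card - 1).choose k := by
  have : ((S.powersetCard (k+1)).filter (fun A => x ∈ A)).card
      = ((S.erase x).powersetCard k).card := by
    apply Finset.card_nbij' (fun A => A.erase x) (fun B => insert x B)
    · intro A hA
      simp only [Finset.mem_coe, mem_filter, mem_powersetCard] at hA
      simp only [Finset.mem_coe, mem_powersetCard]
      refine ⟨erase_subset_erase _ hA.1.1, ?_⟩
      rw [card_erase_of_mem hA.2, hA.1.2]; omega
    · intro B hB
      rw [Finset.mem_coe, mem_powersetCard] at hB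
      have hxB : x ∉ B := fun h => (mem_erase.mp (hB.1 h)).1 rfl
      simp only [Finset.mem_coe, mem_filter, mem_powersetCard]
      refine ⟨⟨?_, by rw [card_insert_of_notMem hxB, hB.2]⟩, mem_insert_self _ _⟩
      intro y hy
      rcases mem_insert.mp hy with rfl | hy
      · exact hx
      · exact (erase_subset _ _) (hB.1 hy)
    · intro A hA
      simp only [Finset.mem_coe, mem_filter] at hA
      exact insert_erase hA.2
    · intro B hB
      rw [Finset.mem_coe, mem_powersetCard] at hB
      have hxB : x ∉ B := fun h => (mem_erase.mp (hB.1 h)).1 rfl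
      exact erase_insert hxB
  rw [this, Finset.card_powersetCard, card_erase_of_mem hx]

lemma aux_card_filter_two {α : Type*} [DecidableEq α] (S : Finset α) (x y : α) (hxy : x ≠ y) (m : ℕ) :
    ((S.powersetCard m).filter (fun A => x ∈ A ∧ y ∈ A)).card ≤ S.card ^ (m - 2) := by
  calc ((S.powersetCard m).filter (fun A => x ∈ A ∧ y ∈ A)).card
      ≤ (S.powersetCard (m-2)).card := by
        apply Finset.card_le_card_of_injOn (fun A => (A.erase x).erase y)
        · intro A hA
          simp only [Finset.mem_coe, mem_filter, mem_powersetCard] at hA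
          simp only [Finset.mem_coe, mem_powersetCard]
          refine ⟨(erase_subset_erase _ (erase_subset_erase _ hA.1.1)).trans
            ((erase_subset _ _).trans (erase_subset _ _)), ?_⟩
          rw [card_erase_of_mem (mem_erase.mpr ⟨hxy.symm, hA.2.2⟩), card_erase_of_mem hA.2.1,
            hA.1.2]; omega
        · intro A hA B hB h
          simp only [coe_filter, Set.mem_setOf_eq, mem_powersetCard] at hA hB
          have : ∀ C : Finset α, x ∈ C → y ∈ C → insert x (insert y ((C.erase x).erase y)) = C := by
            intro C hxC hyC
            rw [insert_erase (mem_erase.mpr ⟨hxy.symm, hyC⟩), insert_erase hxC]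
          simp only [] at h
          rw [← this A hA.2.1 hA.2.2, ← this B hB.2.1 hB.2.2, h]
      _ ≤ S.card ^ (m - 2) := by
        rw [Finset.card_powersetCard]; exact Nat.choose_le_pow _ _


lemma aux_prod_union {β Ω : Type*} [DecidableEq β] (f : β → Ω → ℝ)
    (h01 : ∀ j ω, f j ω = 0 ∨ f j ω = 1) (s t : Finset β) (ω : Ω) :
    (∏ j ∈ s, f j ω) * (∏ j ∈ t, f j ω) = ∏ j ∈ s ∪ t, f j ω := by
  rw [← Finset.prod_union_inter]
  by_cases h : ∀ j ∈ s ∩ t, f j ω = 1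
  · rw [Finset.prod_eq_one h, mul_one]
  · push_neg at h
    obtain ⟨j, hj, hj1⟩ := h
    have hj0 : f j ω = 0 := (h01 j ω).resolve_right hj1
    rw [Finset.prod_eq_zero hj hj0, Finset.prod_eq_zero (Finset.mem_union_left _ (Finset.mem_of_mem_inter_left hj)) hj0]
    ring

lemma aux_integral_prod {ι Ω : Type*} [MeasurableSpace Ω] (μ : Measure Ω)
    [IsProbabilityMeasure μ] (p : ℝ) (hp0 : 0 ≤ p) (Y : ι → Ω → ℝ)
    (hmeas : ∀ e, Measurable (Y e)) (h01 : ∀ e ω, Y e ω = 0 ∨ Y e ω = 1)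
    (hp : ∀ e, μ {ω | Y e ω = 1} = ENNReal.ofReal p)
    (hindep : iIndepFun Y μ) (s : Finset ι) :
    ∫ ω, ∏ e ∈ s, Y e ω ∂μ = p ^ s.card := by
  classical
  induction s using Finset.cons_induction with
  | empty => simp
  | cons a s ha ih =>
    have hint : ∀ e, ∫ ω, Y e ω ∂μ = p := by
      intro e
      have : Y e = Set.indicator {ω | Y e ω = 1} (fun _ => (1:ℝ)) := by
        funext ω
        simp only [Set.indicator_apply, Set.mem_setOf_eq]
        by_cases h : Y e ω = 1
        · simp [h]
        · simp [h, (h01 e ω).resolve_right h]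
      rw [this, integral_indicator_const]
      · simp [measureReal_def, hp e, ENNReal.toReal_ofReal hp0]
      · exact measurableSet_eq_fun (hmeas e) measurable_const
    have hIndep : IndepFun (∏ j ∈ s, Y j) (Y a) μ :=
      hindep.indepFun_finset_prod_of_notMem hmeas ha
    have hPm : AEStronglyMeasurable (∏ j ∈ s, Y j) μ := by
      rw [Finset.prod_fn]
      exact (Finset.measurable_prod s (fun j _ => hmeas j)).aestronglyMeasurable
    have := hIndep.symm.integral_mul_eq_mul_integral (hmeas a).aestronglyMeasurable hPm
    simp only [Finset.prod_cons, Finset.card_cons]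
    calc ∫ ω, Y a ω * ∏ e ∈ s, Y e ω ∂μ
        = ∫ ω, (Y a * ∏ e ∈ s, Y e) ω ∂μ := by
          congr 1; funext ω; simp [Finset.prod_apply]
      _ = (∫ ω, Y a ω ∂μ) * ∫ ω, (∏ e ∈ s, Y e) ω ∂μ := this
      _ = p * p ^ s.card := by
          rw [hint a]
          congr 1
          rw [← ih]
          congr 1; funext ω; simp [Finset.prod_apply]
      _ = p ^ (s.card + 1) := by rw [pow_succ]; ring

lemma aux_sum_inter_card {α : Type*} [DecidableEq α] (S : Finset α) (m : ℕ) (hm : 1 ≤ m) :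
    ∑ A ∈ S.powersetCard m, ∑ A' ∈ S.powersetCard m, (A ∩ A').card
      = S.card * ((S.card - 1).choose (m-1))^2 := by
  have hsub : ∀ A ∈ S.powersetCard m, A ⊆ S := fun A hA => (mem_powersetCard.mp hA).1
  have key : ∀ A ∈ S.powersetCard m, ∀ A' ∈ S.powersetCard m,
      (A ∩ A').card = ∑ x ∈ S, (if x ∈ A then 1 else 0) * (if x ∈ A' then 1 else 0) := by
    intro A hA A' hA'
    have : A ∩ A' = S.filter (fun x => x ∈ A ∧ x ∈ A') := by
      ext z
      simp only [mem_inter, mem_filter]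
      exact ⟨fun h => ⟨hsub A hA h.1, h⟩, fun h => h.2⟩
    rw [this, Finset.card_filter]
    apply Finset.sum_congr rfl
    intro x _
    split_ifs with h1 h2 h3 <;> simp_all
  rw [Finset.sum_congr rfl (fun A hA => Finset.sum_congr rfl (fun A' hA' => key A hA A' hA'))]
  have step1 : ∀ A ∈ S.powersetCard m,
      ∑ A' ∈ S.powersetCard m, ∑ x ∈ S, (if x ∈ A then 1 else 0) * (if x ∈ A' then 1 else 0)
      = ∑ x ∈ S, (if x ∈ A then 1 else 0) * ((S.card - 1).choose (m-1)) := by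
    intro A _
    rw [Finset.sum_comm]
    apply Finset.sum_congr rfl
    intro x hx
    rw [← Finset.mul_sum]
    congr 1
    rw [← Finset.card_filter]
    obtain ⟨k, rfl⟩ : ∃ k, m = k + 1 := ⟨m - 1, by omega⟩
    rw [aux_card_filter_mem S x hx k]
    simp
  rw [Finset.sum_congr rfl step1, Finset.sum_comm]
  have step2 : ∀ x ∈ S,
      ∑ A ∈ S.powersetCard m, (if x ∈ A then 1 else 0) * ((S.card - 1).choose (m-1))
      = ((S.card - 1).choose (m-1))^2 := by
    intro x hx
    rw [← Finset.sum_mul, ← Finset.card_filter]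
    obtain ⟨k, rfl⟩ : ∃ k, m = k + 1 := ⟨m - 1, by omega⟩
    rw [aux_card_filter_mem S x hx k]
    simp [sq]
  rw [Finset.sum_congr rfl step2, Finset.sum_const, smul_eq_mul]

lemma aux_sum_two_bound {α : Type*} [DecidableEq α] (S : Finset α) (m : ℕ) (hm : 1 ≤ m) :
    ∑ A ∈ S.powersetCard m, ∑ A' ∈ S.powersetCard m,
      (if 2 ≤ (A ∩ A').card then 1 else 0)
      ≤ S.card ^ (2*m - 2) := by
  rcases Nat.lt_or_ge m 2 with hm2 | hm2
  · -- m = 1 : intersections have card ≤ 1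
    have : ∀ A ∈ S.powersetCard m, ∀ A' ∈ S.powersetCard m,
        (if 2 ≤ (A ∩ A').card then 1 else 0) = 0 := by
      intro A hA A' _
      have h1 : (A ∩ A').card ≤ m :=
        le_trans (Finset.card_le_card (Finset.inter_subset_left)) (le_of_eq (mem_powersetCard.mp hA).2)
      rw [if_neg (by omega)]
    rw [Finset.sum_congr rfl (fun A hA => Finset.sum_congr rfl (fun A' hA' => this A hA A' hA'))]
    simp
  · -- m ≥ 2
    have hsub : ∀ A ∈ S.powersetCard m, A ⊆ S := fun A hA => (mem_powersetCard.mp hA).1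
    have pt : ∀ A ∈ S.powersetCard m, ∀ A' ∈ S.powersetCard m,
        (if 2 ≤ (A ∩ A').card then 1 else 0)
        ≤ ∑ x ∈ S, ∑ y ∈ S.erase x,
            (if x ∈ A ∧ y ∈ A then 1 else 0) * (if x ∈ A' ∧ y ∈ A' then 1 else 0) := by
      intro A hA A' hA'
      split_ifs with h
      · obtain ⟨x, hx, y, hy, hxy⟩ := Finset.one_lt_card.mp h
        have hxS : x ∈ S := hsub A hA (Finset.mem_of_mem_inter_left hx)
        have hyS : y ∈ S.erase x := Finset.mem_erase.mpr ⟨fun h => hxy (h ▸ rfl), hsub A hA (Finset.mem_of_mem_inter_left hy)⟩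
        calc (1:ℕ) = (if x ∈ A ∧ y ∈ A then 1 else 0) * (if x ∈ A' ∧ y ∈ A' then 1 else 0) := by
              simp only [mem_inter] at hx hy
              rw [if_pos ⟨hx.1, hy.1⟩, if_pos ⟨hx.2, hy.2⟩]
          _ ≤ ∑ y ∈ S.erase x, (if x ∈ A ∧ y ∈ A then 1 else 0) * (if x ∈ A' ∧ y ∈ A' then 1 else 0) :=
              Finset.single_le_sum (f := fun y => (if x ∈ A ∧ y ∈ A then 1 else 0) * (if x ∈ A' ∧ y ∈ A' then 1 else 0)) (fun _ _ => Nat.zero_le _) hyS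
          _ ≤ _ := Finset.single_le_sum (f := fun x => ∑ y ∈ S.erase x, (if x ∈ A ∧ y ∈ A then 1 else 0) * (if x ∈ A' ∧ y ∈ A' then 1 else 0)) (fun _ _ => Nat.zero_le _) hxS
      · exact Nat.zero_le _
    calc ∑ A ∈ S.powersetCard m, ∑ A' ∈ S.powersetCard m, (if 2 ≤ (A ∩ A').card then 1 else 0)
        ≤ ∑ A ∈ S.powersetCard m, ∑ A' ∈ S.powersetCard m, ∑ x ∈ S, ∑ y ∈ S.erase x,
            (if x ∈ A ∧ y ∈ A then 1 else 0) * (if x ∈ A' ∧ y ∈ A' then 1 else 0) :=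
          Finset.sum_le_sum (fun A hA => Finset.sum_le_sum (fun A' hA' => pt A hA A' hA'))
      _ = ∑ x ∈ S, ∑ A ∈ S.powersetCard m, ∑ A' ∈ S.powersetCard m, ∑ y ∈ S.erase x,
            (if x ∈ A ∧ y ∈ A then 1 else 0) * (if x ∈ A' ∧ y ∈ A' then 1 else 0) := by
          rw [show (∑ A ∈ S.powersetCard m, ∑ A' ∈ S.powersetCard m, ∑ x ∈ S, ∑ y ∈ S.erase x,
            (if x ∈ A ∧ y ∈ A then 1 else 0) * (if x ∈ A' ∧ y ∈ A' then 1 else 0))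
            = ∑ A ∈ S.powersetCard m, ∑ x ∈ S, ∑ A' ∈ S.powersetCard m, ∑ y ∈ S.erase x,
            (if x ∈ A ∧ y ∈ A then 1 else 0) * (if x ∈ A' ∧ y ∈ A' then 1 else 0)
            from Finset.sum_congr rfl fun A _ => Finset.sum_comm]
          exact Finset.sum_comm
      _ = ∑ x ∈ S, ∑ y ∈ S.erase x,
            (∑ A ∈ S.powersetCard m, if x ∈ A ∧ y ∈ A then 1 else 0)
            * (∑ A' ∈ S.powersetCard m, if x ∈ A' ∧ y ∈ A' then 1 else 0) := by
          apply Finset.sum_congr rfl; intro x _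
          rw [show (∑ A ∈ S.powersetCard m, ∑ A' ∈ S.powersetCard m, ∑ y ∈ S.erase x,
            (if x ∈ A ∧ y ∈ A then 1 else 0) * (if x ∈ A' ∧ y ∈ A' then 1 else 0))
            = ∑ A ∈ S.powersetCard m, ∑ y ∈ S.erase x, ∑ A' ∈ S.powersetCard m,
            (if x ∈ A ∧ y ∈ A then 1 else 0) * (if x ∈ A' ∧ y ∈ A' then 1 else 0)
            from Finset.sum_congr rfl fun A _ => Finset.sum_comm, Finset.sum_comm]
          apply Finset.sum_congr rfl; intro y _
          rw [Finset.sum_mul_sum]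
      _ ≤ ∑ x ∈ S, ∑ y ∈ S.erase x, S.card ^ (m-2) * S.card ^ (m-2) := by
          apply Finset.sum_le_sum; intro x _
          apply Finset.sum_le_sum; intro y hy
          have hxy : x ≠ y := fun h => (Finset.mem_erase.mp hy).1 h.symm
          apply Nat.mul_le_mul <;>
            · rw [← Finset.card_filter]
              exact aux_card_filter_two S x y hxy m
      _ ≤ S.card * (S.card * (S.card ^ (m-2) * S.card ^ (m-2))) := by
          have h1 : ∀ x ∈ S, ∑ _y ∈ S.erase x, S.card ^ (m-2) * S.card ^ (m-2)
              ≤ S.card * (S.card ^ (m-2) * S.card ^ (m-2)) := by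
            intro x _
            rw [Finset.sum_const, smul_eq_mul]
            exact Nat.mul_le_mul_right _ (Finset.card_le_card (Finset.erase_subset _ _))
          calc ∑ x ∈ S, ∑ _y ∈ S.erase x, S.card ^ (m-2) * S.card ^ (m-2)
              ≤ ∑ _x ∈ S, S.card * (S.card ^ (m-2) * S.card ^ (m-2)) := Finset.sum_le_sum h1
            _ = S.card * (S.card * (S.card ^ (m-2) * S.card ^ (m-2))) := by
                rw [Finset.sum_const, smul_eq_mul]
      _ = S.card ^ (2*m-2) := by
          have h2 : 2*m-2 = 1 + (1 + ((m-2)+(m-2))) := by omega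
          rw [h2, pow_add, pow_one, pow_add, pow_one, pow_add]

lemma aux_diag {α : Type*} [DecidableEq α] (S : Finset α) (m : ℕ) (hm : 1 ≤ m) (p : ℝ)
    (hp0 : 0 ≤ p) (hp1 : p ≤ 1) :
    |(∑ A ∈ S.powersetCard m, ∑ A' ∈ S.powersetCard m,
        (p^(2*m - (A ∩ A').card) - p^(2*m)))
      - p^(2*m-1)*(1-p) * ((S.card * ((S.card - 1).choose (m-1))^2 : ℕ) : ℝ)|
      ≤ ((m:ℝ)+2) * (S.card:ℝ)^(2*m-2) := by
  set c : ℝ := p^(2*m-1)*(1-p) with hc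
  have hc' : c = p^(2*m-1) - p^(2*m) := by
    rw [hc, mul_sub, mul_one, ← pow_succ]
    congr 2
    omega
  have hc0 : 0 ≤ c := mul_nonneg (pow_nonneg hp0 _) (by linarith)
  have hc1 : c ≤ 1 := by
    calc c ≤ 1 * 1 := mul_le_mul (pow_le_one₀ hp0 hp1) (by linarith) (by linarith) (by norm_num)
      _ = 1 := by norm_num
  have pointwise : ∀ A ∈ S.powersetCard m, ∀ A' ∈ S.powersetCard m,
      |(p^(2*m - (A ∩ A').card) - p^(2*m)) - c * ((A ∩ A').card : ℝ)|
        ≤ ((m:ℝ)+2) * (if 2 ≤ (A ∩ A').card then 1 else 0) := by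
    intro A hA A' _
    have hkm : (A ∩ A').card ≤ m := by
      rw [← (mem_powersetCard.mp hA).2]
      exact Finset.card_le_card Finset.inter_subset_left
    rcases Nat.lt_or_ge (A ∩ A').card 2 with hk | hk
    · interval_cases h : (A ∩ A').card
      · simp
      · simp only [Nat.cast_one, mul_one]
        rw [hc', if_neg (show ¬ (2:ℕ) ≤ 1 by omega)]
        simp only [mul_zero]
        rw [show p ^ (2*m-1) - p^(2*m) - (p^(2*m-1) - p^(2*m)) = 0 by ring, abs_zero]
    · rw [if_pos hk, mul_one]
      have h1 : |p^(2*m - (A ∩ A').card) - p^(2*m)| ≤ 1 := by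
        rw [abs_sub_le_iff]
        constructor
        · have := pow_nonneg hp0 (2*m)
          have := pow_le_one₀ hp0 hp1 (n := 2*m - (A ∩ A').card)
          linarith
        · have := pow_nonneg hp0 (2*m - (A ∩ A').card)
          have := pow_le_one₀ hp0 hp1 (n := 2*m)
          linarith
      have h2 : |c * ((A ∩ A').card : ℝ)| ≤ (m:ℝ) := by
        rw [abs_of_nonneg (mul_nonneg hc0 (Nat.cast_nonneg _))]
        calc c * ((A ∩ A').card : ℝ) ≤ 1 * (m:ℝ) := by
              apply mul_le_mul hc1 _ (Nat.cast_nonneg _) (by norm_num)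
              exact_mod_cast hkm
          _ = (m:ℝ) := by norm_num
      calc |(p^(2*m - (A ∩ A').card) - p^(2*m)) - c * ((A ∩ A').card : ℝ)|
          ≤ |p^(2*m - (A ∩ A').card) - p^(2*m)| + |c * ((A ∩ A').card : ℝ)| := abs_sub _ _
        _ ≤ 1 + (m:ℝ) := add_le_add h1 h2
        _ ≤ (m:ℝ) + 2 := by linarith
  have e : c * ((S.card * ((S.card - 1).choose (m-1))^2 : ℕ) : ℝ)
      = ∑ A ∈ S.powersetCard m, ∑ A' ∈ S.powersetCard m, c * ((A ∩ A').card : ℝ) := by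
    rw [← aux_sum_inter_card S m hm]
    push_cast
    rw [Finset.mul_sum]
    apply Finset.sum_congr rfl
    intro A _
    rw [Finset.mul_sum]
  rw [e, ← Finset.sum_sub_distrib]
  have e2 : ∀ A ∈ S.powersetCard m,
      (∑ A' ∈ S.powersetCard m, (p^(2*m - (A ∩ A').card) - p^(2*m)))
        - (∑ A' ∈ S.powersetCard m, c * ((A ∩ A').card : ℝ))
      = ∑ A' ∈ S.powersetCard m,
          ((p^(2*m - (A ∩ A').card) - p^(2*m)) - c * ((A ∩ A').card : ℝ)) := by
    intro A _
    rw [← Finset.sum_sub_distrib]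
  rw [Finset.sum_congr rfl e2]
  calc |∑ A ∈ S.powersetCard m, ∑ A' ∈ S.powersetCard m,
          ((p^(2*m - (A ∩ A').card) - p^(2*m)) - c * ((A ∩ A').card : ℝ))|
      ≤ ∑ A ∈ S.powersetCard m, |∑ A' ∈ S.powersetCard m,
          ((p^(2*m - (A ∩ A').card) - p^(2*m)) - c * ((A ∩ A').card : ℝ))| :=
        Finset.abs_sum_le_sum_abs _ _
    _ ≤ ∑ A ∈ S.powersetCard m, ∑ A' ∈ S.powersetCard m,
          |(p^(2*m - (A ∩ A').card) - p^(2*m)) - c * ((A ∩ A').card : ℝ)| :=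
        Finset.sum_le_sum (fun A _ => Finset.abs_sum_le_sum_abs _ _)
    _ ≤ ∑ A ∈ S.powersetCard m, ∑ A' ∈ S.powersetCard m,
          ((m:ℝ)+2) * (if 2 ≤ (A ∩ A').card then 1 else 0) :=
        Finset.sum_le_sum (fun A hA => Finset.sum_le_sum (fun A' hA' => pointwise A hA A' hA'))
    _ = ((m:ℝ)+2) * ((∑ A ∈ S.powersetCard m, ∑ A' ∈ S.powersetCard m,
          (if 2 ≤ (A ∩ A').card then 1 else 0) : ℕ) : ℝ) := by
        rw [Nat.cast_sum, Finset.mul_sum]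
        apply Finset.sum_congr rfl
        intro A _
        rw [Nat.cast_sum, Finset.mul_sum]
        apply Finset.sum_congr rfl
        intro A' _
        split_ifs <;> simp
    _ ≤ ((m:ℝ)+2) * ((S.card ^ (2*m-2) : ℕ) : ℝ) := by
        apply mul_le_mul_of_nonneg_left _ (by positivity)
        exact_mod_cast aux_sum_two_bound S m hm
    _ = ((m:ℝ)+2) * (S.card:ℝ)^(2*m-2) := by push_cast; ring

lemma variance_formula
    (m : ℕ) (hm : 1 ≤ m) (p : ℝ) (hp0 : 0 < p) (hp1 : p < 1)
    {Ω : Type*} [MeasurableSpace Ω] (μ : Measure Ω) [IsProbabilityMeasure μ]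
    (n : ℕ) (hn : 3 ≤ n)
    (X : Fin n → Fin n → Ω → ℝ)
    (hmeas : ∀ i j, Measurable (X i j))
    (hsym : ∀ i j, X i j = X j i)
    (h01 : ∀ i j ω, X i j ω = 0 ∨ X i j ω = 1)
    (hbern : ∀ i j, i ≠ j → μ {ω | X i j ω = 1} = ENNReal.ofReal p)
    (hindep : iIndepFun
      (fun (q : {q : Fin n × Fin n // q.1 < q.2}) ω => X q.1.1 q.1.2 ω) μ) :
    |((∫ ω, (starCount n m X ω)^2 ∂μ) - (∫ ω, starCount n m X ω ∂μ)^2)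
      - 2 * (p^(2*m-1)*(1-p)) * (n:ℝ) * ((n:ℝ)-1) * (((n-2).choose (m-1) : ℕ) : ℝ)^2|
      ≤ ((m:ℝ)+2) * (n:ℝ)^(2*m-1) := by
  classical
  set ι := {q : Fin n × Fin n // q.1 < q.2}
  set Y : ι → Ω → ℝ := fun e ω => X e.1.1 e.1.2 ω with hYdef
  have e0 : ι := ⟨(⟨0, by omega⟩, ⟨1, by omega⟩), by exact Fin.mk_lt_mk.mpr (by omega)⟩
  set E : Fin n → Fin n → ι := edgeOf e0 with hEdef
  have hYmeas : ∀ e : ι, Measurable (Y e) := fun e => hmeas _ _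
  have hY01 : ∀ (e : ι) ω, Y e ω = 0 ∨ Y e ω = 1 := fun e ω => h01 _ _ ω
  have hYbern : ∀ e : ι, μ {ω | Y e ω = 1} = ENNReal.ofReal p := by
    intro e
    exact hbern _ _ (ne_of_lt e.2)
  -- integral over any edge set
  have hIprod : ∀ s : Finset ι, ∫ ω, ∏ e ∈ s, Y e ω ∂μ = p ^ s.card :=
    aux_integral_prod μ p hp0.le Y hYmeas hY01 hYbern hindep
  -- Y ∘ E
  have hYE : ∀ i j : Fin n, i ≠ j → (fun ω => Y (E i j) ω) = X i j := by
    intro i j hij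
    rcases lt_or_gt_of_ne hij with h | h
    · simp only [hEdef, edgeOf, dif_pos h]
      rfl
    · simp only [hEdef, edgeOf, dif_neg (not_lt.mpr h.le), dif_pos h]
      exact (hsym j i) ▸ rfl
  -- products over stars as products over edges
  have hprodE : ∀ (i : Fin n) (A : Finset (Fin n)), A ⊆ Finset.univ.erase i → ∀ ω,
      ∏ j ∈ A, X i j ω = ∏ e ∈ A.image (E i), Y e ω := by
    intro i A hA ω
    rw [Finset.prod_image]
    · apply Finset.prod_congr rfl
      intro j hj
      have hij : i ≠ j := fun h => (Finset.mem_erase.mp (hA hj)).1 h.symm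
      rw [← hYE i j hij]
    · intro j hj j' hj' h
      have hij : i ≠ j := fun h => (Finset.mem_erase.mp (hA hj)).1 h.symm
      have hij' : i ≠ j' := fun h => (Finset.mem_erase.mp (hA hj')).1 h.symm
      rcases edgeOf_eq_iff e0 hij hij' h with ⟨_, h2⟩ | ⟨h1, h2⟩
      · exact h2
      · exact absurd h1 hij'
  have hcardE : ∀ (i : Fin n) (A : Finset (Fin n)), A ⊆ Finset.univ.erase i →
      (A.image (E i)).card = A.card := by
    intro i A hA
    apply Finset.card_image_of_injOn
    intro j hj j' hj' h
    have hij : i ≠ j := fun h => (Finset.mem_erase.mp (hA hj)).1 h.symm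
    have hij' : i ≠ j' := fun h => (Finset.mem_erase.mp (hA hj')).1 h.symm
    rcases edgeOf_eq_iff e0 hij hij' h with ⟨_, h2⟩ | ⟨h1, h2⟩
    · exact h2
    · exact absurd h1 hij'
  -- T notation
  set T : Fin n → Finset (Fin n) → Ω → ℝ := fun i A ω => ∏ j ∈ A, X i j ω with hTdef
  have hT01 : ∀ i A ω, T i A ω = 0 ∨ T i A ω = 1 := by
    intro i A ω
    induction A using Finset.cons_induction with
    | empty => right; simp [hTdef]
    | cons a s ha ih =>
      simp only [hTdef, Finset.prod_cons] at *
      rcases h01 i a ω with h | h <;> rcases ih with h' | h' <;> rw [h, h'] <;> simp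
  have hTmeas : ∀ i A, Measurable (T i A) := by
    intro i A
    exact Finset.measurable_prod A (fun j _ => hmeas i j)
  have hTbd : ∀ i A ω, 0 ≤ T i A ω ∧ T i A ω ≤ 1 := by
    intro i A ω
    rcases hT01 i A ω with h | h <;> rw [h] <;> norm_num
  have hTint : ∀ i A, Integrable (T i A) μ := by
    intro i A
    apply (integrable_const (1:ℝ)).mono' (hTmeas i A).aestronglyMeasurable
    apply ae_of_all
    intro ω
    rw [Real.norm_eq_abs, abs_of_nonneg (hTbd i A ω).1]
    exact (hTbd i A ω).2
  have hTTint : ∀ i A i' A', Integrable (fun ω => T i A ω * T i' A' ω) μ := by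
    intro i A i' A'
    apply (integrable_const (1:ℝ)).mono' ((hTmeas i A).mul (hTmeas i' A')).aestronglyMeasurable
    apply ae_of_all
    intro ω
    rw [Real.norm_eq_abs, Pi.mul_apply, abs_of_nonneg (mul_nonneg (hTbd i A ω).1 (hTbd i' A' ω).1)]
    calc T i A ω * T i' A' ω ≤ 1 * 1 :=
        mul_le_mul (hTbd i A ω).2 (hTbd i' A' ω).2 (hTbd i' A' ω).1 (by norm_num)
      _ = 1 := by norm_num
  -- first moment of a star product
  have I1 : ∀ (i : Fin n) (A : Finset (Fin n)), A ⊆ Finset.univ.erase i →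
      ∫ ω, T i A ω ∂μ = p ^ A.card := by
    intro i A hA
    have : ∀ ω, T i A ω = ∏ e ∈ A.image (E i), Y e ω := hprodE i A hA
    rw [integral_congr_ae (ae_of_all _ this), hIprod, hcardE i A hA]
  -- second moment, same center
  have I2 : ∀ (i : Fin n) (A A' : Finset (Fin n)), A ⊆ Finset.univ.erase i →
      A' ⊆ Finset.univ.erase i → A.card = m → A'.card = m →
      ∫ ω, T i A ω * T i A' ω ∂μ = p ^ (2*m - (A ∩ A').card) := by
    intro i A A' hA hA' hcA hcA'
    have hpt : ∀ ω, T i A ω * T i A' ω = T i (A ∪ A') ω :=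
      fun ω => aux_prod_union (X i) (fun j ω => h01 i j ω) A A' ω
    rw [integral_congr_ae (ae_of_all _ hpt), I1 i (A ∪ A') (Finset.union_subset hA hA')]
    congr 1
    have h1 : (A ∪ A').card + (A ∩ A').card = A.card + A'.card :=
      Finset.card_union_add_card_inter A A'
    have h2 : (A ∩ A').card ≤ m := by
      rw [← hcA]; exact Finset.card_le_card Finset.inter_subset_left
    omega
  -- second moment, different centers
  have I3 : ∀ (i i' : Fin n) (A A' : Finset (Fin n)), i ≠ i' →
      A ⊆ Finset.univ.erase i → A' ⊆ Finset.univ.erase i' → A.card = m → A'.card = m →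
      ∫ ω, T i A ω * T i' A' ω ∂μ
        = if i' ∈ A ∧ i ∈ A' then p ^ (2*m-1) else p ^ (2*m) := by
    intro i i' A A' hii hA hA' hcA hcA'
    set s : Finset ι := A.image (E i) with hs
    set s' : Finset ι := A'.image (E i') with hs'
    have hpt : ∀ ω, T i A ω * T i' A' ω = ∏ e ∈ s ∪ s', Y e ω := by
      intro ω
      rw [hTdef]
      simp only []
      rw [hprodE i A hA ω, hprodE i' A' hA' ω]
      exact aux_prod_union Y hY01 s s' ω
    rw [integral_congr_ae (ae_of_all _ hpt), hIprod]
    have hmem : ∀ e, e ∈ s ∩ s' → (i' ∈ A ∧ i ∈ A') ∧ e = E i i' := by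
      intro e he
      rw [Finset.mem_inter, hs, hs'] at he
      obtain ⟨h1, h2⟩ := he
      obtain ⟨j, hj, rfl⟩ := Finset.mem_image.mp h1
      obtain ⟨j', hj', hee⟩ := Finset.mem_image.mp h2
      have hij : i ≠ j := fun h => (Finset.mem_erase.mp (hA hj)).1 h.symm
      have hij' : i' ≠ j' := fun h => (Finset.mem_erase.mp (hA' hj')).1 h.symm
      rcases edgeOf_eq_iff e0 hij' hij hee with ⟨he1, he2⟩ | ⟨he1, he2⟩
      · exact absurd he1.symm hii
      · subst he1; subst he2
        exact ⟨⟨hj, hj'⟩, rfl⟩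
    have hinter : (s ∩ s').card = if i' ∈ A ∧ i ∈ A' then 1 else 0 := by
      by_cases hcond : i' ∈ A ∧ i ∈ A'
      · rw [if_pos hcond]
        have : s ∩ s' = {E i i'} := by
          apply Finset.Subset.antisymm
          · intro e he
            rw [Finset.mem_singleton]
            exact (hmem e he).2
          · intro e he
            rw [Finset.mem_singleton] at he
            subst he
            rw [Finset.mem_inter, hs, hs']
            constructor
            · exact Finset.mem_image.mpr ⟨i', hcond.1, rfl⟩
            · exact Finset.mem_image.mpr ⟨i, hcond.2, (edgeOf_comm e0 i' i).trans rfl⟩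
        rw [this, Finset.card_singleton]
      · rw [if_neg hcond, Finset.card_eq_zero, Finset.eq_empty_iff_forall_notMem]
        intro e he
        exact hcond (hmem e he).1
    have hcard : (s ∪ s').card = 2*m - (s ∩ s').card := by
      have h1 := Finset.card_union_add_card_inter s s'
      rw [hcardE i A hA, hcardE i' A' hA', hcA, hcA'] at h1
      have h2 : (s ∩ s').card ≤ 2*m := by rw [hinter]; split_ifs <;> omega
      omega
    rw [hcard, hinter]
    split_ifs <;> norm_num
  -- abbreviations
  set P : Fin n → Finset (Finset (Fin n)) := fun i => (Finset.univ.erase i).powersetCard m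
    with hPdef
  have hcard_erase : ∀ i : Fin n, (Finset.univ.erase i).card = n - 1 := by
    intro i
    rw [Finset.card_erase_of_mem (Finset.mem_univ i), Finset.card_univ, Fintype.card_fin]
  have hPmem : ∀ i A, A ∈ P i → A ⊆ Finset.univ.erase i ∧ A.card = m :=
    fun i A hA => Finset.mem_powersetCard.mp hA
  have hpp : p^m * p^m = p^(2*m) := by rw [← pow_add]; congr 1; omega
  set c : ℝ := p^(2*m-1)*(1-p) with hcdef
  have hc' : c = p^(2*m-1) - p^(2*m) := by
    rw [hcdef, mul_sub, mul_one, ← pow_succ]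
    congr 2
    omega
  -- first moment
  have hSapply : ∀ ω, starCount n m X ω = ∑ i, ∑ A ∈ P i, T i A ω := fun ω => rfl
  have int2 : ∀ i, Integrable (fun ω => ∑ A ∈ P i, T i A ω) μ :=
    fun i => integrable_finset_sum _ (fun A _ => hTint i A)
  have hES : ∫ ω, starCount n m X ω ∂μ = ∑ i, ∑ A ∈ P i, p ^ m := by
    rw [integral_congr_ae (ae_of_all _ hSapply),
      integral_finset_sum _ (fun i _ => int2 i)]
    apply Finset.sum_congr rfl
    intro i _
    rw [integral_finset_sum _ (fun A _ => hTint i A)]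
    apply Finset.sum_congr rfl
    intro A hA
    rw [I1 i A (hPmem i A hA).1, (hPmem i A hA).2]
  -- second moment
  have intB3 : ∀ (i i' : Fin n) (A : Finset (Fin n)),
      Integrable (fun ω => ∑ A' ∈ P i', T i A ω * T i' A' ω) μ :=
    fun i i' A => integrable_finset_sum _ (fun A' _ => hTTint i A i' A')
  have intB2 : ∀ (i i' : Fin n),
      Integrable (fun ω => ∑ A ∈ P i, ∑ A' ∈ P i', T i A ω * T i' A' ω) μ :=
    fun i i' => integrable_finset_sum _ (fun A _ => intB3 i i' A)
  have intB1 : ∀ (i : Fin n),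
      Integrable (fun ω => ∑ i', ∑ A ∈ P i, ∑ A' ∈ P i', T i A ω * T i' A' ω) μ :=
    fun i => integrable_finset_sum _ (fun i' _ => intB2 i i')
  have hsq : ∀ ω, (starCount n m X ω)^2
      = ∑ i, ∑ i', ∑ A ∈ P i, ∑ A' ∈ P i', T i A ω * T i' A' ω := by
    intro ω
    rw [sq, hSapply ω, Finset.sum_mul_sum]
    apply Finset.sum_congr rfl
    intro i _
    apply Finset.sum_congr rfl
    intro i' _
    rw [Finset.sum_mul_sum]
  have hES2 : ∫ ω, (starCount n m X ω)^2 ∂μ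
      = ∑ i, ∑ i', ∑ A ∈ P i, ∑ A' ∈ P i', ∫ ω, T i A ω * T i' A' ω ∂μ := by
    rw [integral_congr_ae (ae_of_all _ hsq),
      integral_finset_sum _ (fun i _ => intB1 i)]
    apply Finset.sum_congr rfl
    intro i _
    rw [integral_finset_sum _ (fun i' _ => intB2 i i')]
    apply Finset.sum_congr rfl
    intro i' _
    rw [integral_finset_sum _ (fun A _ => intB3 i i' A)]
    apply Finset.sum_congr rfl
    intro A _
    rw [integral_finset_sum _ (fun A' _ => hTTint i A i' A')]
  -- the variance as a sum of covariances
  set g : Fin n → Fin n → ℝ :=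
    fun i i' => ∑ A ∈ P i, ∑ A' ∈ P i', (∫ ω, T i A ω * T i' A' ω ∂μ - p^m * p^m)
    with hgdef
  have hVar : (∫ ω, (starCount n m X ω)^2 ∂μ) - (∫ ω, starCount n m X ω ∂μ)^2
      = ∑ i, ∑ i', g i i' := by
    rw [hES2]
    rw [hES]
    rw [sq]
    rw [Finset.sum_mul_sum]
    rw [← Finset.sum_sub_distrib]
    apply Finset.sum_congr rfl
    intro i _
    rw [← Finset.sum_sub_distrib]
    apply Finset.sum_congr rfl
    intro i' _
    rw [hgdef]
    simp only []
    rw [Finset.sum_mul_sum, ← Finset.sum_sub_distrib]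
    apply Finset.sum_congr rfl
    intro A _
    rw [← Finset.sum_sub_distrib]
  -- off-diagonal terms
  have hfiltercard : ∀ i i' : Fin n, i ≠ i' →
      ((P i').filter (fun A => i ∈ A)).card = (n-2).choose (m-1) := by
    intro i i' hii
    have hmemS : i ∈ Finset.univ.erase i' := Finset.mem_erase.mpr ⟨hii, Finset.mem_univ i⟩
    have h := aux_card_filter_mem (Finset.univ.erase i') i hmemS (m-1)
    rw [show m - 1 + 1 = m from by omega, hcard_erase i'] at h
    rw [hPdef]
    simp only []
    rw [h, show n - 1 - 1 = n - 2 from by omega]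
  have hgoff : ∀ i i' : Fin n, i ≠ i' →
      g i i' = c * (((n-2).choose (m-1) : ℕ) : ℝ)^2 := by
    intro i i' hii
    rw [hgdef]
    simp only []
    have step : ∀ A ∈ P i, ∑ A' ∈ P i', (∫ ω, T i A ω * T i' A' ω ∂μ - p^m * p^m)
        = if i' ∈ A then (((n-2).choose (m-1) : ℕ) : ℝ) * c else 0 := by
      intro A hA
      have h1 : ∀ A' ∈ P i', (∫ ω, T i A ω * T i' A' ω ∂μ - p^m * p^m)
          = if i' ∈ A ∧ i ∈ A' then c else 0 := by
        intro A' hA'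
        rw [I3 i i' A A' hii (hPmem i A hA).1 (hPmem i' A' hA').1
          (hPmem i A hA).2 (hPmem i' A' hA').2, hpp]
        split_ifs with h
        · rw [hc']
        · ring
      rw [Finset.sum_congr rfl h1]
      by_cases hQ : i' ∈ A
      · rw [if_pos hQ]
        have : ∀ A' ∈ P i', (if i' ∈ A ∧ i ∈ A' then c else 0) = (if i ∈ A' then c else 0) := by
          intro A' _
          by_cases h : i ∈ A' <;> simp [h, hQ]
        rw [Finset.sum_congr rfl this, ← Finset.sum_filter, Finset.sum_const,
          hfiltercard i i' hii, nsmul_eq_mul]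
      · rw [if_neg hQ]
        apply Finset.sum_eq_zero
        intro A' _
        rw [if_neg (fun h => hQ h.1)]
    rw [Finset.sum_congr rfl step, ← Finset.sum_filter, Finset.sum_const,
      hfiltercard i' i hii.symm, nsmul_eq_mul]
    ring
  -- diagonal terms
  have hgdiag : ∀ i : Fin n,
      |g i i - c * ((((n-1) * ((n-2).choose (m-1))^2 : ℕ)) : ℝ)|
        ≤ ((m:ℝ)+2) * (((n-1 : ℕ)):ℝ)^(2*m-2) := by
    intro i
    have e1 : g i i = ∑ A ∈ P i, ∑ A' ∈ P i,
        (p^(2*m - (A ∩ A').card) - p^(2*m)) := by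
      rw [hgdef]
      simp only []
      apply Finset.sum_congr rfl
      intro A hA
      apply Finset.sum_congr rfl
      intro A' hA'
      rw [I2 i A A' (hPmem i A hA).1 (hPmem i A' hA').1 (hPmem i A hA).2 (hPmem i A' hA').2,
        hpp]
    have hb := aux_diag (Finset.univ.erase i) m hm p hp0.le hp1.le
    rw [hcard_erase i, show n - 1 - 1 = n - 2 from by omega] at hb
    rw [e1]
    exact hb
  -- assemble
  rw [hVar]
  have hsplit : ∀ i : Fin n, ∑ i', g i i'
      = g i i + ((n:ℝ)-1) * (c * (((n-2).choose (m-1) : ℕ) : ℝ)^2) := by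
    intro i
    rw [← Finset.add_sum_erase _ (g i) (Finset.mem_univ i)]
    congr 1
    rw [Finset.sum_congr rfl (fun i' hi' => hgoff i i' (Finset.mem_erase.mp hi').1.symm),
      Finset.sum_const, hcard_erase i, nsmul_eq_mul]
    congr 1
    push_cast [Nat.cast_sub (show 1 ≤ n from by omega)]
    ring
  rw [Finset.sum_congr rfl (fun i _ => hsplit i), Finset.sum_add_distrib,
    Finset.sum_const, Finset.card_univ, Fintype.card_fin, nsmul_eq_mul]
  set dd : ℝ := c * ((((n-1) * ((n-2).choose (m-1))^2 : ℕ)) : ℝ) with hdddef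
  have hdd : dd = ((n:ℝ)-1) * (c * (((n-2).choose (m-1) : ℕ) : ℝ)^2) := by
    rw [hdddef]
    push_cast [Nat.cast_sub (show 1 ≤ n from by omega)]
    ring
  have hre : (∑ i : Fin n, g i i)
        + (n:ℝ) * (((n:ℝ)-1) * (c * (((n-2).choose (m-1) : ℕ) : ℝ)^2))
        - 2 * (p^(2*m-1)*(1-p)) * (n:ℝ) * ((n:ℝ)-1) * (((n-2).choose (m-1) : ℕ) : ℝ)^2
      = ∑ i : Fin n, (g i i - dd) := by
    rw [Finset.sum_sub_distrib, Finset.sum_const, Finset.card_univ, Fintype.card_fin,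
      nsmul_eq_mul, hdd, ← hcdef]
    ring
  rw [hre]
  calc |∑ i : Fin n, (g i i - dd)|
      ≤ ∑ i : Fin n, |g i i - dd| := Finset.abs_sum_le_sum_abs _ _
    _ ≤ ∑ _i : Fin n, ((m:ℝ)+2) * (((n-1 : ℕ)):ℝ)^(2*m-2) :=
        Finset.sum_le_sum (fun i _ => hgdiag i)
    _ = (n:ℝ) * (((m:ℝ)+2) * (((n-1 : ℕ)):ℝ)^(2*m-2)) := by
        rw [Finset.sum_const, Finset.card_univ, Fintype.card_fin, nsmul_eq_mul]
    _ ≤ (n:ℝ) * (((m:ℝ)+2) * ((n:ℝ))^(2*m-2)) := by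
        apply mul_le_mul_of_nonneg_left _ (Nat.cast_nonneg n)
        apply mul_le_mul_of_nonneg_left _ (by positivity)
        apply pow_le_pow_left₀ (Nat.cast_nonneg _)
        exact_mod_cast Nat.sub_le n 1
    _ = ((m:ℝ)+2) * (n:ℝ)^(2*m-1) := by
        rw [show 2*m-1 = (2*m-2)+1 from by omega, pow_succ]
        ring

/-- For fixed `p ∈ (0,1)` and fixed `m ≥ 1`,
`Var[S_{m+1,n}] ~ (2/((m-1)!)²) n^{2m} p^{2m-1} (1-p)` as `n → ∞`,
i.e. the ratio of the two sides tends to `1`. -/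
theorem stmt_17 (m : ℕ) (hm : 1 ≤ m) (p : ℝ) (hp0 : 0 < p) (hp1 : p < 1)
    (Ω : ℕ → Type*) [∀ n, MeasurableSpace (Ω n)]
    (μ : (n : ℕ) → Measure (Ω n)) (hprob : ∀ n, IsProbabilityMeasure (μ n))
    (X : (n : ℕ) → Fin n → Fin n → Ω n → ℝ)
    (hmeas : ∀ n i j, Measurable (X n i j))
    (hsym : ∀ n i j, X n i j = X n j i)
    (hdiag : ∀ n i, X n i i = 0)
    (h01 : ∀ n i j ω, X n i j ω = 0 ∨ X n i j ω = 1)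
    (hbern : ∀ n i j, i ≠ j → μ n {ω | X n i j ω = 1} = ENNReal.ofReal p)
    (hindep : ∀ n, iIndepFun
      (fun (q : {q : Fin n × Fin n // q.1 < q.2}) ω => X n q.1.1 q.1.2 ω) (μ n)) :
    Tendsto (fun n : ℕ =>
        ((∫ ω, (starCount n m (X n) ω) ^ 2 ∂ μ n) -
          (∫ ω, starCount n m (X n) ω ∂ μ n) ^ 2) /
        ((2 / ((m - 1).factorial : ℝ) ^ 2) * (n : ℝ) ^ (2 * m) * p ^ (2 * m - 1) * (1 - p)))
      atTop (nhds 1) := by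
  classical
  have hF0 : ((m-1).factorial : ℝ) ≠ 0 := by
    exact_mod_cast (Nat.factorial_pos (m-1)).ne'
  have hc0 : (0:ℝ) < p^(2*m-1)*(1-p) := mul_pos (pow_pos hp0 _) (by linarith)
  set F : ℝ := ((m-1).factorial : ℝ) with hF
  set V : ℕ → ℝ := fun n => (∫ ω, (starCount n m (X n) ω)^2 ∂ μ n)
    - (∫ ω, starCount n m (X n) ω ∂ μ n)^2 with hVdef
  set D : ℕ → ℝ := fun n => (2 / F^2) * (n:ℝ)^(2*m) * p^(2*m-1) * (1-p) with hDdef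
  set M : ℕ → ℝ := fun n =>
    2 * (p^(2*m-1)*(1-p)) * (n:ℝ) * ((n:ℝ)-1) * (((n-2).choose (m-1) : ℕ):ℝ)^2 with hMdef
  have key : ∀ n : ℕ, 3 ≤ n → |V n - M n| ≤ ((m:ℝ)+2) * (n:ℝ)^(2*m-1) := by
    intro n hn
    haveI := hprob n
    exact variance_formula m hm p hp0 hp1 (μ n) n hn (X n) (hmeas n) (hsym n) (h01 n)
      (hbern n) (hindep n)
  have hsplitfun : (fun n : ℕ => V n / D n)
      = fun n : ℕ => M n / D n + (V n - M n) / D n := by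
    funext n
    ring
  show Tendsto (fun n : ℕ => V n / D n) atTop (nhds 1)
  rw [hsplitfun]
  have hp' : p^(2*m-1) ≠ 0 := (pow_pos hp0 _).ne'
  have h1p : (1:ℝ) - p ≠ 0 := by linarith
  have hmain : Tendsto (fun n : ℕ => M n / D n) atTop (nhds 1) := by
    -- eventual identity with an explicit product
    have heq : ∀ᶠ n : ℕ in atTop, M n / D n
        = (((n:ℝ)-1)/(n:ℝ)) * (∏ i ∈ range (m-1), (((n:ℝ) - 2 - (i:ℝ))/(n:ℝ)))^2 := by
      filter_upwards [eventually_ge_atTop (m+2)] with n hn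
      have hn0 : (0:ℝ) < (n:ℝ) := by
        have : 0 < n := by omega
        exact_mod_cast this
      have hprod : ∏ i ∈ range (m-1), ((n:ℝ) - 2 - (i:ℝ))
          = F * (((n-2).choose (m-1) : ℕ):ℝ) := by
        have h1 : (((n-2).descFactorial (m-1) : ℕ) : ℝ)
            = ∏ i ∈ range (m-1), ((n:ℝ) - 2 - (i:ℝ)) := by
          rw [Nat.descFactorial_eq_prod_range, Nat.cast_prod]
          apply Finset.prod_congr rfl
          intro i hi
          have hi' : i < m - 1 := Finset.mem_range.mp hi
          rw [show n - 2 - i = n - (2 + i) from by omega, Nat.cast_sub (by omega)]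
          push_cast
          ring
        rw [← h1, hF]
        exact_mod_cast Nat.descFactorial_eq_factorial_mul_choose (n-2) (m-1)
      rw [hMdef, hDdef]
      simp only []
      rw [Finset.prod_div_distrib, Finset.prod_const, Finset.card_range, hprod,
        show (n:ℝ)^(2*m) = ((n:ℝ)^(m-1))^2 * (n:ℝ)^2 from by
          rw [← pow_mul, ← pow_add]; congr 1; omega]
      have hXne : (n:ℝ)^(m-1) ≠ 0 := by positivity
      field_simp
    have hfac : ∀ i : ℕ, Tendsto (fun n : ℕ => ((n:ℝ) - 2 - (i:ℝ))/(n:ℝ)) atTop (nhds 1) := by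
      intro i
      have he : ∀ᶠ n : ℕ in atTop, ((n:ℝ) - 2 - (i:ℝ))/(n:ℝ)
          = 1 - ((2:ℝ)+i) * (1/(n:ℝ)) := by
        filter_upwards [eventually_ge_atTop 1] with n hn
        have hn0 : (n:ℝ) ≠ 0 := by
          have : 0 < n := by omega
          exact_mod_cast this.ne'
        field_simp
        ring
      have : Tendsto (fun n : ℕ => 1 - ((2:ℝ)+i) * (1/(n:ℝ))) atTop (nhds (1 - ((2:ℝ)+i) * 0)) :=
        tendsto_const_nhds.sub (tendsto_const_nhds.mul tendsto_one_div_atTop_nhds_zero_nat)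
      rw [show (1:ℝ) - ((2:ℝ)+i) * 0 = 1 from by ring] at this
      exact Tendsto.congr' (Filter.EventuallyEq.symm he) this
    have hone : Tendsto (fun n : ℕ => ((n:ℝ)-1)/(n:ℝ)) atTop (nhds 1) := by
      have he : ∀ᶠ n : ℕ in atTop, ((n:ℝ)-1)/(n:ℝ) = 1 - (1:ℝ) * (1/(n:ℝ)) := by
        filter_upwards [eventually_ge_atTop 1] with n hn
        have hn0 : (n:ℝ) ≠ 0 := by
          have : 0 < n := by omega
          exact_mod_cast this.ne'
        field_simp
      have : Tendsto (fun n : ℕ => 1 - (1:ℝ) * (1/(n:ℝ))) atTop (nhds (1 - (1:ℝ) * 0)) :=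
        tendsto_const_nhds.sub (tendsto_const_nhds.mul tendsto_one_div_atTop_nhds_zero_nat)
      rw [show (1:ℝ) - (1:ℝ) * 0 = 1 from by ring] at this
      exact Tendsto.congr' (Filter.EventuallyEq.symm he) this
    have hprodlim : Tendsto (fun n : ℕ => ∏ i ∈ range (m-1), (((n:ℝ) - 2 - (i:ℝ))/(n:ℝ)))
        atTop (nhds 1) := by
      have := tendsto_finset_prod (f := fun (i : ℕ) (n : ℕ) => ((n:ℝ) - 2 - (i:ℝ))/(n:ℝ))
        (a := fun _ => (1:ℝ)) (range (m-1)) (fun i _ => hfac i)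
      simpa using this
    have := hone.mul (hprodlim.pow 2)
    rw [show (1:ℝ) * 1^2 = 1 from by ring] at this
    exact Tendsto.congr' (Filter.EventuallyEq.symm heq) this
  have herr : Tendsto (fun n : ℕ => (V n - M n) / D n) atTop (nhds 0) := by
    rw [tendsto_zero_iff_abs_tendsto_zero]
    apply squeeze_zero' (g := fun n : ℕ =>
      (((m:ℝ)+2) * F^2/(2*(p^(2*m-1)*(1-p)))) * (1/(n:ℝ)))
    · exact Eventually.of_forall (fun n => abs_nonneg _)
    · filter_upwards [eventually_ge_atTop 3] with n hn
      have hn0 : (0:ℝ) < (n:ℝ) := by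
        have : 0 < n := by omega
        exact_mod_cast this
      have hD0 : 0 < D n := by
        rw [hDdef]
        have : (0:ℝ) < F^2 := by positivity
        have h2 : (0:ℝ) < (n:ℝ)^(2*m) := by positivity
        have h3 : (0:ℝ) < 1 - p := by linarith
        positivity
      show |(V n - M n) / D n| ≤ (((m:ℝ)+2) * F^2/(2*(p^(2*m-1)*(1-p)))) * (1/(n:ℝ))
      rw [abs_div, abs_of_pos hD0, div_le_iff₀ hD0]
      calc |V n - M n| ≤ ((m:ℝ)+2) * (n:ℝ)^(2*m-1) := key n hn
        _ = (((m:ℝ)+2) * F^2/(2*(p^(2*m-1)*(1-p)))) * (1/(n:ℝ)) * D n := by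
            rw [hDdef]
            simp only []
            rw [show (n:ℝ)^(2*m) = (n:ℝ)^(2*m-1) * (n:ℝ) from by
              rw [← pow_succ]; congr 1; omega]
            field_simp
    · have : Tendsto (fun n : ℕ =>
          (((m:ℝ)+2) * F^2/(2*(p^(2*m-1)*(1-p)))) * (1/(n:ℝ))) atTop
          (nhds ((((m:ℝ)+2) * F^2/(2*(p^(2*m-1)*(1-p)))) * 0)) :=
        tendsto_const_nhds.mul tendsto_one_div_atTop_nhds_zero_nat
      simpa using this
  have := hmain.add herr
  simpa using this
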